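/- arXiv:1602.01791 — 3 statements merged into one kernel-verified Lean document; each statement's English description precedes it below -/
import Mathlib

section
/- Let R be a commutative ring, σ a type of variables, and x, y : σ two distinct variables. Let g be a multivariate polynomial in MvPolynomial σ R such that every exponent vector d in the support of g satisfies d(x) = 0 and d(y) = 0 (g involves neither x nor y). Let q ≥ 2 be a natural number. Then for every finitely supported exponent vector d : σ →₀ ℕ with d(x) = 0 and d(y) = 0, the coefficient of the monomial with exponent vector d + (q−2)·e_x + (q−2)·e_y (i.e. x^{q−2} y^{q−2} times the monomial of exponent d) in the polynomial (X_x · X_y − g)^{q−1} equals −(q−1) · (coefficient of d in g), where q−1 is taken as an element of R. -/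
open MvPolynomial

lemma aux_coeff_pow_zero {R : Type*} [CommRing R] {σ : Type*} {x : σ} (g : MvPolynomial σ R)
    (hg : ∀ d ∈ g.support, d x = 0) (n : ℕ) (e : σ →₀ ℕ) (he : e x ≠ 0) :
    coeff e (g ^ n) = 0 := by
  classical
  induction n generalizing e with
  | zero =>
    rw [pow_zero, coeff_one, if_neg]
    rintro rfl; simp at he
  | succ n ih =>
    rw [pow_succ, coeff_mul]
    refine Finset.sum_eq_zero fun p hp => ?_
    rw [Finset.HasAntidiagonal.mem_antidiagonal] at hp
    by_cases h1 : p.2 x = 0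
    · have h2 : p.1 x ≠ 0 := by
        intro h; apply he
        rw [← hp, Finsupp.add_apply, h, h1]
      rw [ih _ h2, zero_mul]
    · by_cases h3 : p.2 ∈ g.support
      · exact absurd (hg _ h3) h1
      · rw [notMem_support_iff] at h3
        rw [h3, mul_zero]

/-- The key coefficient computation behind Fedder's criterion for `xy = g`:
if `g` involves neither the variable `x` nor `y`, and `q ≥ 2`, then for any
exponent vector `d` with `d x = 0` and `d y = 0`, the coefficient of
`x^(q-2) y^(q-2) * (monomial d)` in `(X x * X y - g) ^ (q - 1)` equals
`-(q - 1) * (coefficient of d in g)`. -/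
theorem coeff_pow_sub_xy
    {R : Type*} [CommRing R] {σ : Type*} {x y : σ} (hxy : x ≠ y)
    (g : MvPolynomial σ R)
    (hg : ∀ d ∈ g.support, d x = 0 ∧ d y = 0)
    (q : ℕ) (hq : 2 ≤ q) :
    ∀ d : σ →₀ ℕ, d x = 0 → d y = 0 →
      coeff (d + Finsupp.single x (q - 2) + Finsupp.single y (q - 2))
          ((X x * X y - g) ^ (q - 1)) =
        -((q - 1 : ℕ) : R) * coeff d g := by
  classical
  intro d hdx hdy
  set E := d + Finsupp.single x (q - 2) + Finsupp.single y (q - 2) with hE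
  have hEx : E x = q - 2 := by
    simp [hE, Finsupp.add_apply, hdx, Finsupp.single_apply, hxy.symm]
  have hEy : E y = q - 2 := by
    simp [hE, Finsupp.add_apply, hdy, Finsupp.single_apply, hxy]
  rw [sub_pow, coeff_sum]
  have hterm : ∀ m : ℕ,
      (-1 : MvPolynomial σ R) ^ (m + (q - 1)) * (X x * X y) ^ m * g ^ ((q - 1) - m)
        * ((q - 1).choose m : MvPolynomial σ R)
      = g ^ ((q - 1) - m) *
          monomial (Finsupp.single x m + Finsupp.single y m)
            ((-1 : R) ^ (m + (q - 1)) * ((q - 1).choose m : R)) := by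
    intro m
    rw [mul_pow, X_pow_eq_monomial, X_pow_eq_monomial, monomial_mul, mul_one,
      show (monomial (Finsupp.single x m + Finsupp.single y m))
          ((-1 : R) ^ (m + (q - 1)) * ((q - 1).choose m : R))
        = C ((-1 : R) ^ (m + (q - 1)) * ((q - 1).choose m : R)) *
            monomial (Finsupp.single x m + Finsupp.single y m) 1 from by
        rw [C_mul_monomial, mul_one]]
    simp only [map_mul, map_pow, map_neg, map_one, C_eq_coe_nat]
    ring
  rw [Finset.sum_eq_single (q - 2)]
  · rw [hterm, coeff_mul_monomial']
    have hEu : E = d + (Finsupp.single x (q - 2) + Finsupp.single y (q - 2)) := by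
      rw [hE, add_assoc]
    rw [if_pos (hEu ▸ le_add_self), hEu, add_tsub_cancel_right,
      show q - 1 - (q - 2) = 1 by omega, pow_one,
      show q - 1 = (q - 2) + 1 by omega, Nat.choose_succ_self_right,
      Odd.neg_one_pow ⟨q - 2, by omega⟩]
    push_cast
    ring
  · intro m hm hm'
    rw [hterm, coeff_mul_monomial']
    split_ifs with h
    · have hmle : m ≤ q - 2 := by
        have := h x
        simpa [Finsupp.add_apply, Finsupp.single_apply, hxy.symm, hEx] using this
      have hx0 : (E - (Finsupp.single x m + Finsupp.single y m)) x ≠ 0 := by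
        rw [Finsupp.tsub_apply, hEx]
        simp [Finsupp.add_apply, Finsupp.single_apply, hxy.symm]
        omega
      rw [aux_coeff_pow_zero g (fun e he => (hg e he).1) _ _ hx0, zero_mul]
    · rfl
  · intro h
    exact absurd (Finset.mem_range.2 (by omega)) h
end

section
/- Let k be a field of prime characteristic p > 0, σ a type of variables, and x, y : σ two distinct variables. Let g ∈ MvPolynomial σ k be a polynomial such that every exponent vector in the support of g vanishes at x and at y. Suppose d₀ is an exponent vector in the support of g (so the coefficient of g at d₀ is nonzero), and let e ≥ 1 be an integer such that d₀(i) < p^e − 1 for every variable i. Then the polynomial (X_x · X_y − g)^{p^e − 1} does not belong to the ideal of MvPolynomial σ k generated by the p^e-th powers of the variables, {(X_i)^{p^e} : i ∈ σ}. -/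
open MvPolynomial

/-- Fedder-criterion claim from the paper: over a field `k` of characteristic `p > 0`,
if `g` involves neither `x` nor `y`, and some exponent vector `d₀` in the support of
`g` satisfies `d₀ i < p^e - 1` for all variables `i` (with `e ≥ 1`), then
`(X x * X y - g) ^ (p^e - 1)` is not in the ideal generated by the `p^e`-th powers of
the variables. -/
theorem pow_sub_xy_not_mem_frobenius_power
    {k : Type*} [Field k] {p : ℕ} (hp : p.Prime) [CharP k p]
    {σ : Type*} {x y : σ} (hxy : x ≠ y)
    (g : MvPolynomial σ k)
    (hg : ∀ d ∈ g.support, d x = 0 ∧ d y = 0)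
    (d₀ : σ →₀ ℕ) (hd₀ : d₀ ∈ g.support)
    (e : ℕ) (he : 1 ≤ e) (hd₀small : ∀ i : σ, d₀ i < p ^ e - 1) :
    (X x * X y - g) ^ (p ^ e - 1) ∉
      Ideal.span (Set.range fun i : σ => (X i : MvPolynomial σ k) ^ p ^ e) := by
  classical
  set q := p ^ e with hq
  have hq2 : 2 ≤ q := le_trans hp.two_le (Nat.le_self_pow (by omega) p)
  -- support of powers of -g avoids x and y
  have haux : ∀ (m : ℕ) (d : σ →₀ ℕ), d ∈ ((-g) ^ m).support → d x = 0 ∧ d y = 0 := by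
    intro m
    induction m with
    | zero =>
      intro d hd
      rw [pow_zero, MvPolynomial.mem_support_iff, MvPolynomial.coeff_one] at hd
      by_cases h : (0 : σ →₀ ℕ) = d
      · rw [← h]; simp
      · simp [h] at hd
    | succ n ih =>
      intro d hd
      rw [pow_succ] at hd
      have := MvPolynomial.support_mul _ _ hd
      rw [Finset.mem_add] at this
      obtain ⟨a, ha, b, hb, rfl⟩ := this
      have h1 := ih a ha
      have h2 : b ∈ g.support := by simpa using hb
      have h2' := hg b h2
      simp [h1.1, h1.2, h2'.1, h2'.2]
  -- the distinguished exponent vector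
  set u : σ →₀ ℕ := Finsupp.single x (q - 2) + Finsupp.single y (q - 2) with hu
  set d : σ →₀ ℕ := u + d₀ with hd
  have hd0xy := hg d₀ hd₀
  have hdx : d x = q - 2 := by
    simp [hd, hu, Finsupp.single_apply, hxy, Ne.symm hxy, hd0xy.1]
  have hdy : d y = q - 2 := by
    simp [hd, hu, Finsupp.single_apply, hxy, Ne.symm hxy, hd0xy.2]
  have hdi : ∀ i, i ≠ x → i ≠ y → d i = d₀ i := by
    intro i hix hiy
    simp [hd, hu, Finsupp.single_apply, Ne.symm hix, Ne.symm hiy]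
  -- compute the coefficient of d in the power
  have hcoeff : MvPolynomial.coeff d ((X x * X y - g) ^ (q - 1)) = g.coeff d₀ := by
    rw [sub_eq_add_neg, add_pow]
    rw [MvPolynomial.coeff_sum]
    have hkey : ∀ j ∈ Finset.range (q - 1 + 1), j ≠ q - 2 →
        MvPolynomial.coeff d ((X x * X y) ^ j * (-g) ^ (q - 1 - j) * ((q-1).choose j : MvPolynomial σ k)) = 0 := by
      intro j _ hj
      have : MvPolynomial.coeff d ((X x * X y) ^ j * (-g) ^ (q - 1 - j)) = 0 := by
        by_contra hne
        have hmem : d ∈ ((X x * X y) ^ j * (-g) ^ (q - 1 - j)).support :=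
          MvPolynomial.mem_support_iff.mpr hne
        have := MvPolynomial.support_mul _ _ hmem
        rw [Finset.mem_add] at this
        obtain ⟨a, ha, b, hb, habd⟩ := this
        have hXY : (X x * X y : MvPolynomial σ k) ^ j
            = monomial (Finsupp.single x j + Finsupp.single y j) 1 := by
          rw [mul_pow, X_pow_eq_monomial, X_pow_eq_monomial, monomial_mul, one_mul]
        rw [hXY] at ha
        have ha' : a = Finsupp.single x j + Finsupp.single y j := by
          have := MvPolynomial.support_monomial_subset ha
          simpa using this
        have hbx := (haux _ _ hb).1
        have : d x = j := by
          rw [← habd, ha']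
          simp [Finsupp.single_apply, hxy, Ne.symm hxy, hbx]
        omega
      rw [mul_comm _ ((q-1).choose j : MvPolynomial σ k),
        ← map_natCast (MvPolynomial.C : k →+* MvPolynomial σ k),
        MvPolynomial.coeff_C_mul, this, mul_zero]
    rw [Finset.sum_eq_single (q - 2)]
    · have hsub : q - 1 - (q - 2) = 1 := by omega
      rw [hsub, pow_one]
      have hXY : (X x * X y : MvPolynomial σ k) ^ (q - 2)
          = monomial u 1 := by
        rw [mul_pow, X_pow_eq_monomial, X_pow_eq_monomial, monomial_mul, one_mul, hu]
      rw [hXY]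
      have hCh : ((q-1).choose (q-2)) = q - 1 := by
        have h1 : q - 2 = (q - 1) - 1 := by omega
        rw [h1, Nat.choose_symm (by omega), Nat.choose_one_right]
      have hcm : MvPolynomial.coeff d (monomial u 1 * -g * ((q-1).choose (q-2) : MvPolynomial σ k))
          = (((q-1).choose (q-2) : ℕ) : k) * (1 * (-g).coeff d₀) := by
        rw [mul_comm _ ((q-1).choose (q-2) : MvPolynomial σ k),
          ← map_natCast (MvPolynomial.C : k →+* MvPolynomial σ k),
          MvPolynomial.coeff_C_mul, hd, MvPolynomial.coeff_monomial_mul]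
      rw [hcm, hCh, one_mul, MvPolynomial.coeff_neg]
      have hq0 : ((q : ℕ) : k) = 0 := by
        rw [hq]
        rw [Nat.cast_pow]
        rw [CharP.cast_eq_zero k p]
        exact zero_pow (by omega)
      have : (((q - 1 : ℕ) : ℕ) : k) = -1 := by
        push_cast [Nat.cast_sub (by omega : 1 ≤ q)]
        rw [hq0]; ring
      rw [this]; ring
    · intro j hjmem hj
      exact hkey j hjmem hj
    · intro h
      exact absurd (Finset.mem_range.mpr (by omega)) h
  -- d is in the support
  have hdsupp : d ∈ ((X x * X y - g) ^ (q - 1)).support := by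
    rw [MvPolynomial.mem_support_iff, hcoeff]
    exact MvPolynomial.mem_support_iff.mp hd₀
  -- now the ideal membership
  intro hmem
  have himg : (Set.range fun i : σ => (X i : MvPolynomial σ k) ^ q)
      = (fun s => monomial s (1 : k)) '' (Set.range fun i : σ => Finsupp.single i q) := by
    ext f
    simp only [Set.mem_range, Set.mem_image]
    constructor
    · rintro ⟨i, rfl⟩
      exact ⟨Finsupp.single i q, ⟨i, rfl⟩, (X_pow_eq_monomial).symm⟩
    · rintro ⟨s, ⟨i, rfl⟩, rfl⟩
      exact ⟨i, X_pow_eq_monomial⟩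
  rw [himg, MvPolynomial.mem_ideal_span_monomial_image] at hmem
  obtain ⟨s, ⟨i, rfl⟩, hle⟩ := hmem d hdsupp
  have : q ≤ d i := Finsupp.single_le_iff.mp hle
  rcases eq_or_ne i x with rfl | hix
  · omega
  rcases eq_or_ne i y with rfl | hiy
  · omega
  have := hdi i hix hiy
  have := hd₀small i
  omega
end

section
/- Let k be an algebraically closed field of prime characteristic p, and let V be a nonzero finite-dimensional k-vector space. Let φ : V → V be a bijective additive map that is p-linear, i.e. φ(c • v) = c^p • φ(v) for all c ∈ k and v ∈ V. Then there exists a k-linear subspace U ⊆ V with φ(U) = U (as sets) such that the quotient V/U is one-dimensional over k; in particular φ descends to a bijective p-linear map on the one-dimensional quotient V/U. -/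
open Polynomial Module


lemma aux_poly {k : Type*} [Field k] [IsAlgClosed k] {p : ℕ} (hp : p.Prime) [CharP k p]
    (n : ℕ) (b : ℕ → k) (hb0 : b 0 ≠ 0) :
    ∃ t : k, t ≠ 0 ∧ ∀ c : ℕ → k, c 0 = b 0 * t ^ p →
      (∀ i, c (i+1) = c i ^ p + b (i+1) * t ^ p) → c n = t := by
  have hp2 : 2 ≤ p := hp.two_le
  set q : ℕ → k[X] := fun i =>
    Nat.rec (C (b 0) * X ^ p) (fun j qj => qj ^ p + C (b (j+1)) * X ^ p) i with hq
  have hq0 : q 0 = C (b 0) * X ^ p := rfl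
  have hqs : ∀ i, q (i+1) = q i ^ p + C (b (i+1)) * X ^ p := fun i => rfl
  have hdeg : ∀ i, (q i).natDegree = p ^ (i+1) := by
    intro i; induction i with
    | zero => rw [hq0, natDegree_C_mul hb0, natDegree_X_pow, pow_one]
    | succ i ih =>
      have h1 : (q i ^ p).natDegree = p ^ (i+2) := by
        rw [natDegree_pow, ih, ← pow_succ']
      have h2 : (C (b (i+1)) * X ^ p).natDegree < (q i ^ p).natDegree := by
        rw [h1]
        calc (C (b (i+1)) * X ^ p).natDegree ≤ p := by
              refine le_trans natDegree_mul_le ?_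
              simp
          _ < p ^ (i+2) := by
              conv_lhs => rw [← pow_one p]
              exact Nat.pow_lt_pow_right hp.one_lt (by omega)
      rw [hqs, natDegree_add_eq_left_of_natDegree_lt h2, h1]
  have hdvd : ∀ i, (X : k[X]) ^ 2 ∣ q i := by
    have hXp : (X : k[X]) ^ 2 ∣ X ^ p := pow_dvd_pow X hp2
    intro i; induction i with
    | zero => rw [hq0]; exact hXp.mul_left _
    | succ i ih =>
      rw [hqs]
      exact dvd_add (ih.trans (dvd_pow_self (q i) hp.pos.ne')) (hXp.mul_left _)
  set P : k[X] := q n - X with hP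
  have hqnc1 : (q n).coeff 1 = 0 := by
    obtain ⟨r, hr⟩ := hdvd n
    rw [hr, mul_comm, coeff_mul_X_pow']
    norm_num
  have hqnc0 : (q n).coeff 0 = 0 :=
    X_dvd_iff.mp ((dvd_pow_self (X : k[X]) two_ne_zero).trans (hdvd n))
  have hple : 2 ≤ p ^ (n+1) := le_trans hp2 (Nat.le_self_pow (by omega) p)
  have hPdeg : P.natDegree = p ^ (n+1) := by
    rw [hP, natDegree_sub_eq_left_of_natDegree_lt, hdeg]
    rw [natDegree_X, hdeg]
    omega
  have hPne : P ≠ 0 := fun h => by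
    rw [h, natDegree_zero] at hPdeg
    omega
  have hXP : (X : k[X]) ∣ P :=
    X_dvd_iff.mpr (by rw [hP, coeff_sub, hqnc0, coeff_X_zero, sub_zero])
  obtain ⟨R, hR⟩ := hXP
  have hRne : R ≠ 0 := fun h => hPne (by rw [hR, h, mul_zero])
  have hc0R : R.coeff 0 = -1 := by
    have h : P.coeff 1 = R.coeff 0 := by rw [hR, coeff_X_mul]
    rw [hP, coeff_sub, hqnc1, coeff_X_one] at h
    rw [← h]; ring
  have hRdeg : R.natDegree ≠ 0 := by
    have h1 : P.natDegree = 1 + R.natDegree := by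
      rw [hR, natDegree_mul X_ne_zero hRne, natDegree_X]
    omega
  have hdegne : R.degree ≠ 0 := by
    rw [degree_eq_natDegree hRne]
    exact_mod_cast hRdeg
  obtain ⟨t, ht⟩ := IsAlgClosed.exists_root R hdegne
  have ht0 : t ≠ 0 := by
    rintro rfl
    rw [IsRoot, ← coeff_zero_eq_eval_zero, hc0R] at ht
    simp at ht
  have hqt : (q n).eval t = t := by
    have h : P.eval t = 0 := by rw [hR, eval_mul, ht]; ring
    rw [hP, eval_sub, eval_X, sub_eq_zero] at h
    exact h
  refine ⟨t, ht0, ?_⟩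
  intro c hc0 hcs
  have key : ∀ i, c i = (q i).eval t := by
    intro i; induction i with
    | zero => rw [hc0, hq0]; simp
    | succ i ih => rw [hcs i, ih, hqs]; simp
  rw [key n, hqt]


lemma exists_fixed_pLinear {k : Type*} [Field k] [IsAlgClosed k] {p : ℕ} (hp : p.Prime)
    [CharP k p] {V : Type*} [AddCommGroup V] [Module k V] [FiniteDimensional k V]
    (hV : Nontrivial V)
    (φ : V → V) (hinj : Function.Injective φ)
    (hadd : ∀ v w : V, φ (v + w) = φ v + φ w)
    (hsemi : ∀ (c : k) (v : V), φ (c • v) = c ^ p • φ v) :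
    ∃ w : V, w ≠ 0 ∧ φ w = w := by
  classical
  have hroot : ∀ c : k, ∃ d : k, d ^ p = c := fun c => IsAlgClosed.exists_pow_nat_eq c hp.pos
  let φ' : V →+ V := AddMonoidHom.mk' φ hadd
  have hφ' : ∀ x, φ' x = φ x := fun _ => rfl
  obtain ⟨v₀, hv₀⟩ := exists_ne (0 : V)
  set u : ℕ → V := fun i => φ^[i] v₀ with hu
  have husucc : ∀ i, u (i+1) = φ (u i) := fun i => Function.iterate_succ_apply' φ i v₀
  -- independence of initial segments with no dependence
  have hind : ∀ j : ℕ, (∀ l < j, u l ∉ Submodule.span k (Set.range fun i : Fin l => u i)) →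
      LinearIndependent k (fun i : Fin j => u i) := by
    intro j
    induction j with
    | zero => intro _; exact linearIndependent_empty_type
    | succ j ih =>
      intro h
      have h1 := ih (fun l hl => h l (lt_trans hl (Nat.lt_succ_self j)))
      have h2 := h j (Nat.lt_succ_self j)
      have heq : (fun i : Fin (j+1) => u i) =
          Fin.snoc (fun i : Fin j => u i) (u j) := by
        funext i
        refine Fin.lastCases ?_ (fun i => ?_) i
        · simp [Fin.snoc_last]
        · simp [Fin.snoc_castSucc]
      rw [heq, linearIndependent_fin_snoc]
      exact ⟨h1, h2⟩
  -- there is a dependence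
  have hex : ∃ l, u l ∈ Submodule.span k (Set.range fun i : Fin l => u i) := by
    by_contra h
    push_neg at h
    have h1 := hind (finrank k V + 1) (fun l _ => h l)
    have h2 := h1.fintype_card_le_finrank
    simp only [Fintype.card_fin] at h2
    omega
  set m := Nat.find hex with hm
  have hQm := Nat.find_spec hex
  have hmin : ∀ l < m, u l ∉ Submodule.span k (Set.range fun i : Fin l => u i) :=
    fun l hl => Nat.find_min hex hl
  have hm0 : m ≠ 0 := by
    intro h
    have h0 := hQm
    rw [← hm, h] at h0
    simp only [Set.range_eq_empty, Submodule.span_empty, Submodule.mem_bot] at h0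
    exact hv₀ h0
  obtain ⟨n, hn⟩ : ∃ n, m = n + 1 := Nat.exists_eq_succ_of_ne_zero hm0
  -- a representation of u m
  rw [Submodule.mem_span_range_iff_exists_fun] at hQm
  obtain ⟨a, ha⟩ := hQm
  set b : ℕ → k := fun i => if h : i < m then a ⟨i, h⟩ else 0 with hb
  have ha' : ∑ i ∈ Finset.range m, b i • u i = u m := by
    rw [Finset.sum_range fun i => b i • u i] at *
    refine Eq.trans ?_ ha
    apply Finset.sum_congr rfl
    intro i _
    simp [hb, i.isLt]
  have hb0 : b 0 ≠ 0 := by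
    intro hb0
    -- then u (m-1) lies in the span of the previous ones
    set d : ℕ → k := fun i => Classical.choose (hroot (b (i+1))) with hd
    have hdp : ∀ i, d i ^ p = b (i+1) := fun i => Classical.choose_spec (hroot (b (i+1)))
    have hstep : φ (∑ i ∈ Finset.range n, d i • u i) = u m := by
      rw [← hφ', map_sum]
      have : ∀ i ∈ Finset.range n, φ' (d i • u i) = b (i+1) • u (i+1) := by
        intro i _
        rw [hφ', hsemi, hdp, husucc]
      rw [Finset.sum_congr rfl this, ← ha', hn, Finset.sum_range_succ', hb0, zero_smul, add_zero]
    have hun : u n = ∑ i ∈ Finset.range n, d i • u i := by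
      apply hinj
      rw [hstep, ← husucc, ← hn]
    have : u n ∈ Submodule.span k (Set.range fun i : Fin n => u i) := by
      rw [hun]
      apply Submodule.sum_mem
      intro i hi
      rw [Finset.mem_range] at hi
      exact Submodule.smul_mem _ _ (Submodule.subset_span ⟨⟨i, hi⟩, rfl⟩)
    exact hmin n (by omega) this
  -- solve the polynomial system
  obtain ⟨t, ht0, hsol⟩ := aux_poly hp n b hb0
  set c : ℕ → k := fun i =>
    Nat.rec (b 0 * t ^ p) (fun j cj => cj ^ p + b (j+1) * t ^ p) i with hc
  have hc0 : c 0 = b 0 * t ^ p := rfl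
  have hcs : ∀ i, c (i+1) = c i ^ p + b (i+1) * t ^ p := fun i => rfl
  have hcn : c n = t := hsol c hc0 hcs
  set w : V := ∑ i ∈ Finset.range m, c i • u i with hw
  have hw0 : w ≠ 0 := by
    intro h
    have hli := hind m hmin
    rw [hw, Finset.sum_range fun i => c i • u i] at h
    have := Fintype.linearIndependent_iff.mp hli (fun i : Fin m => c i) h ⟨0, by omega⟩
    simp only at this
    rcases mul_eq_zero.mp this with h' | h'
    · exact hb0 h'
    · exact ht0 ((pow_eq_zero_iff hp.pos.ne').mp h')
  refine ⟨w, hw0, ?_⟩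
  -- the fixed point computation
  have hφw : φ w = ∑ i ∈ Finset.range m, c i ^ p • u (i+1) := by
    rw [hw, ← hφ', map_sum]
    apply Finset.sum_congr rfl
    intro i _
    rw [hφ', hsemi, husucc]
  rw [hn] at ha'
  have hsmul : ∀ i, t ^ p • (b i • u i) = (b i * t ^ p) • u i := by
    intro i; rw [smul_smul, mul_comm]
  calc φ w = ∑ i ∈ Finset.range n, c i ^ p • u (i+1) + t ^ p • u (n+1) := by
        rw [hφw, hn, Finset.sum_range_succ, hcn]
    _ = ∑ i ∈ Finset.range n, c i ^ p • u (i+1)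
        + (∑ i ∈ Finset.range n, (b (i+1) * t ^ p) • u (i+1) + (b 0 * t ^ p) • u 0) := by
        rw [← ha', Finset.smul_sum, Finset.sum_range_succ']
        congr 1
        congr 1
        · exact Finset.sum_congr rfl fun i _ => hsmul (i+1)
        · exact hsmul 0
    _ = ∑ i ∈ Finset.range n, (c i ^ p • u (i+1) + (b (i+1) * t ^ p) • u (i+1))
        + (b 0 * t ^ p) • u 0 := by
        rw [Finset.sum_add_distrib]; abel
    _ = ∑ i ∈ Finset.range n, c (i+1) • u (i+1) + c 0 • u 0 := by
        congr 1
        exact Finset.sum_congr rfl fun i _ => by rw [hcs i, add_smul]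
    _ = w := by rw [hw, hn, Finset.sum_range_succ']
open FiniteDimensional

set_option maxHeartbeats 1000000 in
/-- Over an algebraically closed field `k` of characteristic `p`, any nonzero
finite-dimensional `k`-vector space with a bijective `p`-linear endomorphism `φ`
admits a `φ`-stable subspace `U` (with `φ(U) = U`) whose quotient is
one-dimensional; thus `φ` descends to a bijective `p`-linear map on `V ⧸ U`. -/
theorem exists_one_dim_quotient_of_pLinear
    {k : Type*} [Field k] [IsAlgClosed k] {p : ℕ} (hp : p.Prime) [CharP k p]
    {V : Type*} [AddCommGroup V] [Module k V] [FiniteDimensional k V]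
    (hV : Nontrivial V)
    (φ : V → V) (hbij : Function.Bijective φ)
    (hadd : ∀ v w : V, φ (v + w) = φ v + φ w)
    (hsemi : ∀ (c : k) (v : V), φ (c • v) = c ^ p • φ v) :
    ∃ U : Submodule k V, φ '' (U : Set V) = (U : Set V) ∧
      Module.finrank k (V ⧸ U) = 1 := by
  classical
  haveI := Fact.mk hp
  have hroot : ∀ c : k, ∃ d : k, d ^ p = c := fun c => IsAlgClosed.exists_pow_nat_eq c hp.pos
  let e := Equiv.ofBijective φ hbij
  have hes : ∀ x, φ (e.symm x) = x := fun x => e.apply_symm_apply x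
  have hse : ∀ x, e.symm (φ x) = x := fun x => e.symm_apply_apply x
  let σ : k → k := fun c => Classical.choose (hroot c)
  have hσ : ∀ c, σ c ^ p = c := fun c => Classical.choose_spec (hroot c)
  have hsadd : ∀ x y, e.symm (x + y) = e.symm x + e.symm y := by
    intro x y
    apply hbij.injective
    rw [hadd, hes, hes, hes]
  have hssmul : ∀ (c : k) x, e.symm (c • x) = σ c • e.symm x := by
    intro c x
    apply hbij.injective
    rw [hsemi, hσ, hes, hes]
  let ψ : Module.Dual k V → Module.Dual k V := fun ξ =>
    { toFun := fun x => ξ (e.symm x) ^ p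
      map_add' := by
        intro x y
        simp only [hsadd, map_add]
        exact add_pow_char _ _ p
      map_smul' := by
        intro c x
        simp only [hssmul, map_smul, smul_eq_mul, RingHom.id_apply]
        rw [mul_pow, hσ]
      }
  have hψ : ∀ ξ x, ψ ξ x = ξ (e.symm x) ^ p := fun _ _ => rfl
  haveI hnt : Nontrivial (Module.Dual k V) := by
    rw [← Module.finrank_pos_iff (R := k), Subspace.dual_finrank_eq]
    exact Module.finrank_pos
  have hψinj : Function.Injective ψ := by
    intro ξ₁ ξ₂ h
    ext x
    have h1 : ψ ξ₁ (φ x) = ψ ξ₂ (φ x) := by rw [h]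
    rw [hψ, hψ, hse] at h1
    have h2 : (ξ₁ x - ξ₂ x) ^ p = 0 := by rw [sub_pow_char, h1, sub_self]
    exact sub_eq_zero.mp ((pow_eq_zero_iff hp.pos.ne').mp h2)
  have hψadd : ∀ ξ η, ψ (ξ + η) = ψ ξ + ψ η := by
    intro ξ η; ext x
    simp only [hψ, LinearMap.add_apply, map_add]
    exact add_pow_char _ _ p
  have hψsemi : ∀ (c : k) ξ, ψ (c • ξ) = c ^ p • ψ ξ := by
    intro c ξ; ext x
    simp only [hψ, LinearMap.smul_apply, smul_eq_mul]
    rw [mul_pow]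
  obtain ⟨ξ, hξ0, hξfix⟩ := exists_fixed_pLinear (k := k) (V := Module.Dual k V) hp hnt ψ hψinj hψadd hψsemi
  have key : ∀ x, ξ (φ x) = ξ x ^ p := by
    intro x
    have h1 : ψ ξ (φ x) = ξ (φ x) := by rw [hξfix]
    rw [hψ, hse] at h1
    exact h1.symm
  refine ⟨LinearMap.ker ξ, ?_, ?_⟩
  · ext x
    simp only [Set.mem_image, SetLike.mem_coe, LinearMap.mem_ker]
    constructor
    · rintro ⟨y, hy, rfl⟩
      rw [key, hy, zero_pow hp.pos.ne']
    · intro hx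
      refine ⟨e.symm x, ?_, hes x⟩
      have h1 : ξ (e.symm x) ^ p = 0 := by rw [← key, hes, hx]
      exact (pow_eq_zero_iff hp.pos.ne').mp h1
  · have hsurj : Function.Surjective ξ := by
      obtain ⟨y, hy⟩ := DFunLike.ne_iff.mp hξ0
      rw [LinearMap.zero_apply] at hy
      intro cc
      refine ⟨(cc * (ξ y)⁻¹) • y, ?_⟩
      rw [map_smul, smul_eq_mul]
      field_simp
    rw [(ξ.quotKerEquivOfSurjective hsurj).finrank_eq, Module.finrank_self]
end
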